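/- Let V and W be varieties of Ω-algebras of the same type without nullary operation symbols. For any equational base Σ of V, the Mal'tsev product V ∘ W is contained in the variety U defined by the set of identities Σ^p. -/

import Mathlib

structure Signature where
  symbols : Type
  arity : symbols → ℕ

structure Alg (S : Signature) where
  carrier : Type
  op : ∀ ω : S.symbols, (Fin (S.arity ω) → carrier) → carrier
  nonempty : Nonempty carrier

inductive Term (S : Signature) (X : Type) : Type
  | var : X → Term S X
  | app : ∀ ω : S.symbols, (Fin (S.arity ω) → Term S X) → Term S X

def Term.eval {S : Signature} {X : Type} (A : Alg S) (env : X → A.carrier) :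
    Term S X → A.carrier
  | .var x => env x
  | .app ω ts => A.op ω fun i => (ts i).eval A env

/-- The algebra `A` satisfies the identity `u = v`. -/
def Alg.sat {S : Signature} (A : Alg S) {X : Type} (u v : Term S X) : Prop :=
  ∀ env : X → A.carrier, u.eval A env = v.eval A env

/-- An identity: a pair of terms in the countably many variables `x₀, x₁, …`. -/
abbrev Ident (S : Signature) := Term S ℕ × Term S ℕ

/-- `A` lies in the variety axiomatized by the set of identities `E`. -/
def Alg.Models {S : Signature} (A : Alg S) (E : Set (Ident S)) : Prop :=
  ∀ e ∈ E, A.sat e.1 e.2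

/-- The identity `u = v` holds in the variety axiomatized by `E`. -/
def Conseq {S : Signature} (E : Set (Ident S)) {X : Type} (u v : Term S X) : Prop :=
  ∀ A : Alg S, A.Models E → A.sat u v

/-- `a` is an idempotent element of `A`. -/
def Alg.IsIdem {S : Signature} (A : Alg S) (a : A.carrier) : Prop :=
  ∀ ω : S.symbols, A.op ω (fun _ => a) = a

/-- `B` is (the universe of) a subalgebra of `A`. -/
def Alg.IsSubuniverse {S : Signature} (A : Alg S) (B : Set A.carrier) : Prop :=
  ∀ ω (a : Fin (S.arity ω) → A.carrier), (∀ i, a i ∈ B) → A.op ω a ∈ B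

/-- The subalgebra of `A` on a nonempty subuniverse `B`. -/
def Alg.subAlg {S : Signature} (A : Alg S) (B : Set A.carrier)
    (h : A.IsSubuniverse B) (hne : B.Nonempty) : Alg S where
  carrier := B
  op ω a := ⟨A.op ω fun i => (a i : A.carrier), h ω _ fun i => (a i).2⟩
  nonempty := hne.to_subtype

/-- A congruence of `A`: an equivalence relation compatible with all operations. -/
structure Congruence {S : Signature} (A : Alg S) where
  rel : A.carrier → A.carrier → Prop
  iseqv : Equivalence rel
  compat : ∀ ω (a b : Fin (S.arity ω) → A.carrier),
    (∀ i, rel (a i) (b i)) → rel (A.op ω a) (A.op ω b)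

def Congruence.setoid {S : Signature} {A : Alg S} (θ : Congruence A) :
    Setoid A.carrier := ⟨θ.rel, θ.iseqv⟩

/-- The quotient algebra `A/θ`. -/
noncomputable def Alg.quot {S : Signature} (A : Alg S) (θ : Congruence A) : Alg S where
  carrier := Quotient θ.setoid
  op ω q := Quotient.mk θ.setoid (A.op ω fun i => (q i).out)
  nonempty := A.nonempty.map (Quotient.mk θ.setoid)

/-- Membership in the Mal'tsev product of the varieties axiomatized by `V` and `W`:
`A` has a congruence `θ` with `A/θ` in (the variety of) `W` such that every
`θ`-class which is a subalgebra of `A` is an algebra in (the variety of) `V`. -/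
def InMaltsev {S : Signature} (V W : Set (Ident S)) (A : Alg S) : Prop :=
  ∃ θ : Congruence A, (A.quot θ).Models W ∧
    ∀ a : A.carrier, ∀ h : A.IsSubuniverse {b | θ.rel a b},
      (A.subAlg {b | θ.rel a b} h ⟨a, θ.iseqv.refl a⟩).Models V

/-- A class of algebras is a variety iff it is axiomatized by some set of identities. -/
def IsVarietyClass {S : Signature} (K : Alg S → Prop) : Prop :=
  ∃ E : Set (Ident S), ∀ A : Alg S, K A ↔ A.Models E

def Term.subst {S : Signature} {X Y : Type} (f : X → Term S Y) :
    Term S X → Term S Y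
  | .var x => f x
  | .app ω ts => .app ω fun i => (ts i).subst f

/-- The set `σᵖ` of identities obtained from the identity `σ` by substituting for
its variables pairwise `W`-equivalent term idempotents of (the variety of) `W`. -/
def sigmaP {S : Signature} (W : Set (Ident S)) (σ : Ident S) : Set (Ident S) :=
  { e | ∃ r : ℕ → Term S ℕ,
      (∀ i j : ℕ, Conseq W (r i) (r j)) ∧
      (∀ ω : S.symbols, Conseq W (Term.app ω fun _ => r 0) (r 0)) ∧
      e = (σ.1.subst r, σ.2.subst r) }

/-- `Σᵖ = ⋃_{σ ∈ Σ} σᵖ`. -/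
def SigmaP {S : Signature} (W : Set (Ident S)) (Sg : Set (Ident S)) :
    Set (Ident S) :=
  ⋃ σ ∈ Sg, sigmaP W σ

lemma eval_subst {S : Signature} {X Y : Type} (A : Alg S) (f : X → Term S Y)
    (env : Y → A.carrier) (t : Term S X) :
    (t.subst f).eval A env = t.eval A (fun x => (f x).eval A env) := by
  induction t with
  | var x => rfl
  | app ω ts ih =>
    show A.op ω _ = A.op ω _
    congr 1; funext i; exact ih i

lemma eval_quot {S : Signature} (A : Alg S) (θ : Congruence A) {X : Type}
    (env : X → A.carrier) (t : Term S X) :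
    t.eval (A.quot θ) (fun x => Quotient.mk θ.setoid (env x))
      = Quotient.mk θ.setoid (t.eval A env) := by
  induction t with
  | var x => rfl
  | app ω ts ih =>
    show Quotient.mk θ.setoid (A.op ω _) = _
    apply Quotient.sound
    apply θ.compat
    intro i
    have h2 : Quotient.mk θ.setoid
        (((ts i).eval (A.quot θ) (fun x => Quotient.mk θ.setoid (env x))).out)
        = Quotient.mk θ.setoid ((ts i).eval A env) := by
      exact (Quotient.out_eq _).trans (ih i)
    exact Quotient.exact h2

lemma eval_subAlg {S : Signature} (A : Alg S) (B : Set A.carrier)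
    (h : A.IsSubuniverse B) (hne : B.Nonempty) {X : Type} (env : X → B)
    (t : Term S X) :
    (fun (x : B) => (x : A.carrier)) (t.eval (A.subAlg B h hne) env)
      = t.eval A (fun x => (env x : A.carrier)) := by
  induction t with
  | var x => rfl
  | app ω ts ih =>
    show A.op ω _ = A.op ω _
    congr 1; funext i; exact ih i

/-- If `Σ` is an equational base of the variety `V` (i.e. the
models of `Σ` are exactly the members of `V`), then the Mal'tsev product `V ∘ W`
is contained in the variety `U` defined by the identities `Σᵖ`. -/
theorem stmt_4 (S : Signature) (h0 : ∀ ω : S.symbols, 0 < S.arity ω)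
    (V W : Set (Ident S)) (Sg : Set (Ident S))
    (hbase : ∀ A : Alg S, A.Models V ↔ A.Models Sg) :
    ∀ A : Alg S, InMaltsev V W A → A.Models (SigmaP W Sg) := by

  rintro A ⟨θ, hq, hcls⟩
  rintro e he
  rw [SigmaP, Set.mem_iUnion₂] at he
  obtain ⟨σ, hσ, r, hr1, hr2, rfl⟩ := he
  intro env
  set a : ℕ → A.carrier := fun i => (r i).eval A env with ha
  have hθ0 : ∀ i, θ.rel (a 0) (a i) := by
    intro i
    have := hr1 0 i (A.quot θ) hq (fun x => Quotient.mk θ.setoid (env x))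
    rw [eval_quot, eval_quot] at this
    exact Quotient.exact this
  have hidem : ∀ ω, θ.rel (A.op ω fun _ => a 0) (a 0) := by
    intro ω
    have := hr2 ω (A.quot θ) hq (fun x => Quotient.mk θ.setoid (env x))
    rw [eval_quot, eval_quot] at this
    exact Quotient.exact this
  have hsub : A.IsSubuniverse {b | θ.rel (a 0) b} := by
    intro ω c hc
    exact θ.iseqv.trans (θ.iseqv.trans (θ.iseqv.symm (hidem ω))
      (θ.compat ω _ _ fun i => hc i)) (θ.iseqv.refl _)
  have hV := hcls (a 0) hsub
  have hSg : (A.subAlg {b | θ.rel (a 0) b} hsub ⟨a 0, θ.iseqv.refl _⟩).Models Sg :=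
    (hbase _).mp hV
  have hsat := hSg σ hσ
  set AB := A.subAlg {b | θ.rel (a 0) b} hsub ⟨a 0, θ.iseqv.refl _⟩
  have hs := hsat (fun i => (⟨a i, hθ0 i⟩ : {b | θ.rel (a 0) b}))
  have h1 : σ.1.eval A (fun i => a i) = σ.2.eval A (fun i => a i) := by
    rw [← eval_subAlg A _ hsub ⟨a 0, θ.iseqv.refl _⟩ (fun i => ⟨a i, hθ0 i⟩) σ.1,
        ← eval_subAlg A _ hsub ⟨a 0, θ.iseqv.refl _⟩ (fun i => ⟨a i, hθ0 i⟩) σ.2]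
    exact congrArg _ hs
  simp only [eval_subst]
  exact h1
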